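/- Let k ≥ 1, let p_1, ..., p_k be positive integers and a_1, ..., a_k integers, and set ℓ_j = a_j + p_{j+1} + ... + p_k (so ℓ_k = a_k). Define b : ∏_j {0, 1, ..., p_j} → ℤ by b(i) = ∏_j c_j(i_j), where c_j(0) = −ℓ_j and c_j(m) = (−1)^(p_j − m) for 1 ≤ m ≤ p_j. Then b satisfies: (Type 1) b(i_1,...,i_{k−1}, 0) + a_k · b(i_1,...,i_{k−1}, p_k) = 0 for all choices of i_1,...,i_{k−1}; (Type 2) b(..., i_j, ...) + b(..., i_j + 1, ...) = 0 whenever 1 ≤ i_j ≤ p_j − 1 and all other components are fixed; (Type 3) for each 1 ≤ j ≤ k−1 and all fixed other components, b(..., 0, p_{j+1}, ...) − b(..., p_j, 0, ...) + (a_j − a_{j+1} + p_{j+1}) · b(..., p_j, p_{j+1}, ...) = 0, where the displayed entries are in positions j and j+1. -/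
import Mathlib


theorem stmt_7 (k : ℕ) (hk : 1 ≤ k) (p : Fin k → ℕ) (hp : ∀ j, 1 ≤ p j)
    (a : Fin k → ℤ) (ℓ : Fin k → ℤ)
    (hℓ : ∀ j, ℓ j = a j + ∑ t ∈ Finset.univ.filter (fun t => j < t), (p t : ℤ))
    (c : (j : Fin k) → ℕ → ℤ)
    (hc0 : ∀ j, c j 0 = -ℓ j)
    (hcm : ∀ j m, 1 ≤ m → m ≤ p j → c j m = (-1) ^ (p j - m))
    (b : ((j : Fin k) → Fin (p j + 1)) → ℤ)
    (hb : ∀ i, b i = ∏ j, c j (i j))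
    (jl : Fin k) (hjl : (jl : ℕ) = k - 1) :
    -- Type 1
    (∀ i : (j : Fin k) → Fin (p j + 1),
        b (Function.update i jl 0) + a jl * b (Function.update i jl (Fin.last (p jl))) = 0) ∧
    -- Type 2
    (∀ (j : Fin k) (m : ℕ) (h1 : 1 ≤ m) (h2 : m + 1 ≤ p j)
        (i : (j : Fin k) → Fin (p j + 1)),
        b (Function.update i j ⟨m, by omega⟩) + b (Function.update i j ⟨m + 1, by omega⟩) = 0) ∧
    -- Type 3
    (∀ (j j' : Fin k), (j : ℕ) + 1 = (j' : ℕ) →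
        ∀ i : (j : Fin k) → Fin (p j + 1),
        b (Function.update (Function.update i j 0) j' (Fin.last (p j'))) -
          b (Function.update (Function.update i j (Fin.last (p j))) j' 0) +
          (a j - a j' + (p j' : ℤ)) *
            b (Function.update (Function.update i j (Fin.last (p j))) j' (Fin.last (p j'))) = 0) := by
  have key : ∀ (i : (j : Fin k) → Fin (p j + 1)) (j : Fin k) (v : Fin (p j + 1)),
      b (Function.update i j v) =
        c j (v : ℕ) * ∏ t ∈ Finset.univ.erase j, c t ((i t : ℕ)) := by
    intro i j v
    rw [hb, ← Finset.mul_prod_erase Finset.univ _ (Finset.mem_univ j)]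
    congr 1
    · rw [Function.update_self]
    · exact Finset.prod_congr rfl fun t ht => by
        rw [Function.update_of_ne (Finset.ne_of_mem_erase ht)]
  have key2 : ∀ (i : (j : Fin k) → Fin (p j + 1)) (j j' : Fin k) (hne : j ≠ j')
      (x : Fin (p j + 1)) (y : Fin (p j' + 1)),
      b (Function.update (Function.update i j x) j' y) =
        c j (x : ℕ) * c j' (y : ℕ) *
          ∏ t ∈ (Finset.univ.erase j').erase j, c t ((i t : ℕ)) := by
    intro i j j' hne x y
    rw [hb, ← Finset.mul_prod_erase Finset.univ _ (Finset.mem_univ j'),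
      ← Finset.mul_prod_erase _ _ (Finset.mem_erase.2 ⟨hne, Finset.mem_univ j⟩)]
    rw [Function.update_self, Function.update_of_ne hne, Function.update_self]
    have : (∏ t ∈ (Finset.univ.erase j').erase j,
        c t ((Function.update (Function.update i j x) j' y t : ℕ))) =
        ∏ t ∈ (Finset.univ.erase j').erase j, c t ((i t : ℕ)) := by
      refine Finset.prod_congr rfl fun t ht => ?_
      obtain ⟨htj, htj'⟩ := Finset.mem_erase.1 ht
      rw [Function.update_of_ne (Finset.ne_of_mem_erase htj'),
        Function.update_of_ne htj]
    rw [this]; ring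
  refine ⟨?_, ?_, ?_⟩
  · -- Type 1
    intro i
    have hfilter : (Finset.univ.filter (fun t => jl < t) : Finset (Fin k)) = ∅ := by
      ext t
      simp only [Finset.mem_filter, Finset.mem_univ, true_and, Finset.notMem_empty,
        iff_false, Fin.lt_def]
      have := t.isLt
      omega
    have hℓjl : ℓ jl = a jl := by rw [hℓ, hfilter]; simp
    rw [key, key]
    have h0 : ((0 : Fin (p jl + 1)) : ℕ) = 0 := rfl
    have hl : ((Fin.last (p jl)) : ℕ) = p jl := rfl
    rw [h0, hl, hc0, hcm jl (p jl) (hp jl) le_rfl, hℓjl, Nat.sub_self, pow_zero]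
    ring
  · -- Type 2
    intro j m h1 h2 i
    rw [key, key]
    have e1 : c j m = (-1 : ℤ) ^ (p j - m) := hcm j m h1 (by omega)
    have e2 : c j (m + 1) = (-1 : ℤ) ^ (p j - (m + 1)) := hcm j (m + 1) (by omega) h2
    have e3 : p j - m = (p j - (m + 1)) + 1 := by omega
    simp only [e1, e2, e3, pow_succ]
    ring
  · -- Type 3
    intro j j' hjj' i
    have hne : j ≠ j' := by
      intro h; rw [h] at hjj'; omega
    have hsum : (Finset.univ.filter (fun t => j < t) : Finset (Fin k)) =
        insert j' (Finset.univ.filter (fun t => j' < t)) := by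
      ext t
      simp only [Finset.mem_filter, Finset.mem_univ, true_and, Finset.mem_insert,
        Fin.lt_def, Fin.ext_iff]
      omega
    have hℓrel : ℓ j = a j + (p j' : ℤ) + (ℓ j' - a j') := by
      rw [hℓ j, hℓ j', hsum, Finset.sum_insert (by simp only [Finset.mem_filter, Finset.mem_univ, true_and, Fin.lt_def]; omega)]
      ring
    rw [key2 _ _ _ hne, key2 _ _ _ hne, key2 _ _ _ hne]
    have h0 : ∀ n : ℕ, ((0 : Fin (n + 1)) : ℕ) = 0 := fun n => rfl
    have hlast : ∀ n : ℕ, ((Fin.last n) : ℕ) = n := fun n => rfl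
    rw [h0, h0, hlast, hlast, hc0, hc0,
      hcm j (p j) (hp j) le_rfl, hcm j' (p j') (hp j') le_rfl,
      Nat.sub_self, Nat.sub_self, pow_zero]
    rw [hℓrel]
    ring
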